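/- arXiv:0810.2139 — 2 statements merged into one kernel-verified Lean document; each statement's English description precedes it below -/
import Mathlib

section
/- A holomorphic 1-form on a compact Riemann surface all of whose periods (integrals over closed loops) are real numbers is identically zero. -/
/-- A holomorphic 1-form on a compact Riemann surface all of whose periods are real
is identically zero. Formalized for a genus-1 surface `ℂ/Λ`, `Λ = ℤω₁ + ℤω₂`:
a holomorphic 1-form is `f dz` with `f` entire and `Λ`-periodic; since `H₁` is
generated by the loops coming from `ω₁, ω₂`, all periods are real iff the integrals
of `f dz` along the segments from `0` to `ω₁` and to `ω₂` are real. -/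
theorem holomorphic_form_real_periods_zero
    (ω₁ ω₂ : ℂ) (hind : LinearIndependent ℝ ![ω₁, ω₂])
    (f : ℂ → ℂ) (hf : Differentiable ℂ f)
    (hper₁ : ∀ z, f (z + ω₁) = f z) (hper₂ : ∀ z, f (z + ω₂) = f z)
    (hreal₁ : (∫ t in (0:ℝ)..1, f (t • ω₁) * ω₁).im = 0)
    (hreal₂ : (∫ t in (0:ℝ)..1, f (t • ω₂) * ω₂).im = 0) :
    ∀ z, f z = 0 := by
  -- basis of ℂ over ℝ from ω₁, ω₂
  have hcard : Fintype.card (Fin 2) = Module.finrank ℝ ℂ := by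
    simp [Complex.finrank_real_complex]
  let b : Module.Basis (Fin 2) ℝ ℂ := basisOfLinearIndependentOfCardEqFinrank hind hcard
  have hb : ⇑b = ![ω₁, ω₂] := coe_basisOfLinearIndependentOfCardEqFinrank hind hcard
  -- f invariant under the lattice
  have hlat : ∀ v ∈ Submodule.span ℤ (Set.range ⇑b), ∀ z, f (z + v) = f z := by
    intro v hv
    refine Submodule.span_induction ?_ ?_ ?_ ?_ hv
    · rintro x ⟨i, rfl⟩
      fin_cases i <;> simp [hb, hper₁, hper₂]
    · simp
    · intro x y _ _ hx hy z
      rw [← add_assoc, hy, hx]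
    · intro n x _ hx
      induction n using Int.induction_on with
      | zero => simp
      | succ k ih =>
        intro z
        have h : z + ((k : ℤ) + 1) • x = (z + x) + (k : ℤ) • x := by
          rw [add_smul, one_smul]; ring
        rw [h, ih, hx]
      | pred k ih =>
        intro z
        have h : z + (-(k : ℤ)) • x = (z + (-(k : ℤ) - 1) • x) + x := by
          rw [sub_smul, one_smul]; ring
        have h2 := hx (z + (-(k : ℤ) - 1) • x)
        rw [← h, ih] at h2
        exact h2.symm
  -- f equals f ∘ fract
  have hfract : ∀ z, f z = f (ZSpan.fract b z) := by
    intro z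
    have h1 : z - ZSpan.fract b z ∈ Submodule.span ℤ (Set.range ⇑b) := by
      rw [ZSpan.fract_apply]
      simpa using (ZSpan.floor b z).2
    have h3 := hlat _ h1 (ZSpan.fract b z)
    have h4 : ZSpan.fract b z + (z - ZSpan.fract b z) = z := by ring
    rw [h4] at h3
    exact h3
  -- bounded
  have hbdd : Bornology.IsBounded (Set.range f) := by
    have hR : ∀ z, ‖ZSpan.fract b z‖ ≤ ∑ i, ‖b i‖ := fun z => ZSpan.norm_fract_le b z
    have : Set.range f ⊆ f '' (Metric.closedBall 0 (∑ i, ‖b i‖)) := by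
      rintro _ ⟨z, rfl⟩
      exact ⟨ZSpan.fract b z, by simpa [Metric.mem_closedBall] using hR z, (hfract z).symm⟩
    exact ((isCompact_closedBall 0 _).image hf.continuous).isBounded.subset this
  -- Liouville: f is constant
  have hconst : ∀ z, f z = f 0 := fun z => hf.apply_eq_apply_of_bounded hbdd z 0
  set c := f 0 with hc
  -- compute integrals
  have hint : ∀ ω : ℂ, (∫ t in (0:ℝ)..1, f (t • ω) * ω) = c * ω := by
    intro ω
    simp only [hconst, intervalIntegral.integral_const, smul_eq_mul]
    simp
  rw [hint ω₁] at hreal₁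
  rw [hint ω₂] at hreal₂
  -- derive c = 0
  have hc0 : c = 0 := by
    by_contra hne
    obtain ⟨a, ha⟩ : ∃ a : ℝ, c * ω₁ = (a : ℂ) :=
      ⟨(c * ω₁).re, by rw [Complex.ext_iff]; simp [hreal₁]⟩
    obtain ⟨a₂, ha₂⟩ : ∃ a₂ : ℝ, c * ω₂ = (a₂ : ℂ) :=
      ⟨(c * ω₂).re, by rw [Complex.ext_iff]; simp [hreal₂]⟩
    have hrel : (a₂ : ℝ) • ω₁ + (-a : ℝ) • ω₂ = 0 := by
      have hmul : c * ((a₂ : ℝ) • ω₁ + (-a : ℝ) • ω₂) = 0 := by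
        simp only [Complex.real_smul]
        rw [show c * ((a₂ : ℂ) * ω₁ + (-a : ℝ) * ω₂)
            = (a₂ : ℂ) * (c * ω₁) + ((-a : ℝ) : ℂ) * (c * ω₂) by push_cast; ring,
          ha, ha₂]
        push_cast; ring
      exact (mul_eq_zero.mp hmul).resolve_left hne
    have hzero := Fintype.linearIndependent_iff.mp hind ![a₂, -a]
      (by simpa [Fin.sum_univ_two] using hrel)
    have ha0 : a = 0 := by have := hzero 1; simpa using this
    have hω₁ : ω₁ ≠ 0 := fun h => hind.ne_zero 0 (by simp [h])
    have : c * ω₁ = 0 := by rw [ha, ha0]; simp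
    exact hω₁ ((mul_eq_zero.mp this).resolve_left hne)
  intro z
  exact (hconst z).trans hc0
end

section
/- If Ω is a holomorphic 1-form on a compact Riemann surface such that Ω − conj(Ω) represents the zero class in first de Rham cohomology, then Ω = 0. -/
/-- If `Ω` is a holomorphic 1-form on a compact Riemann surface such that
`Ω − conj(Ω)` is exact (represents zero in de Rham `H¹`), then `Ω = 0`.
Formalized on a genus-1 surface `ℂ/Λ`: `Ω = f dz` with `f` entire and periodic;
`conj Ω = conj(f) dz̄`. Exactness means there is a periodic real-differentiable
function `h` with `dh = f dz − conj(f) dz̄`, i.e. `(dh)_z(v) = f(z)·v − conj(f(z))·conj(v)`. -/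
theorem holomorphic_form_exact_difference_zero
    (ω₁ ω₂ : ℂ) (hind : LinearIndependent ℝ ![ω₁, ω₂])
    (f : ℂ → ℂ) (hf : Differentiable ℂ f)
    (hper₁ : ∀ z, f (z + ω₁) = f z) (hper₂ : ∀ z, f (z + ω₂) = f z)
    (h : ℂ → ℂ) (hh : Differentiable ℝ h)
    (hhper₁ : ∀ z, h (z + ω₁) = h z) (hhper₂ : ∀ z, h (z + ω₂) = h z)
    (hexact : ∀ z v, fderiv ℝ h z v
      = f z * v - (starRingEnd ℂ) (f z) * (starRingEnd ℂ) v) :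
    ∀ z, f z = 0 := by
  -- Step 1: f is constant (Liouville + double periodicity)
  have p1 : Function.Periodic f ω₁ := hper₁
  have p2 : Function.Periodic f ω₂ := hper₂
  have card2 : Fintype.card (Fin 2) = Module.finrank ℝ ℂ := by
    simp [Complex.finrank_real_complex]
  let b : Module.Basis (Fin 2) ℝ ℂ := basisOfLinearIndependentOfCardEqFinrank hind card2
  have hb0 : b 0 = ω₁ := by
    have := coe_basisOfLinearIndependentOfCardEqFinrank hind card2
    simp [b, this]
  have hb1 : b 1 = ω₂ := by
    have := coe_basisOfLinearIndependentOfCardEqFinrank hind card2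
    simp [b, this]
  set K : Set ℂ := (fun p : ℝ × ℝ => p.1 • ω₁ + p.2 • ω₂) '' (Set.Icc 0 1 ×ˢ Set.Icc 0 1) with hK
  have hKcompact : IsCompact K := by
    apply IsCompact.image (isCompact_Icc.prod isCompact_Icc)
    continuity
  have hrange : Set.range f ⊆ f '' K := by
    rintro _ ⟨z, rfl⟩
    have hz : z = b.repr z 0 • ω₁ + b.repr z 1 • ω₂ := by
      conv_lhs => rw [← b.sum_repr z]
      rw [Fin.sum_univ_two, hb0, hb1]
    set a₁ := b.repr z 0 with ha₁
    set a₂ := b.repr z 1 with ha₂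
    refine ⟨Int.fract a₁ • ω₁ + Int.fract a₂ • ω₂,
      ⟨(Int.fract a₁, Int.fract a₂), ?_, rfl⟩, ?_⟩
    · exact ⟨⟨Int.fract_nonneg _, (Int.fract_lt_one _).le⟩,
        ⟨Int.fract_nonneg _, (Int.fract_lt_one _).le⟩⟩
    · have key : z = (Int.fract a₁ • ω₁ + Int.fract a₂ • ω₂)
          + ((⌊a₂⌋ : ℂ) * ω₂ + (⌊a₁⌋ : ℂ) * ω₁) := by
        rw [hz]
        simp only [Int.fract, Complex.real_smul]
        push_cast
        ring
      calc f (Int.fract a₁ • ω₁ + Int.fract a₂ • ω₂)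
          = f (Int.fract a₁ • ω₁ + Int.fract a₂ • ω₂ + (⌊a₂⌋ : ℂ) * ω₂) :=
            ((p2.int_mul ⌊a₂⌋) _).symm
        _ = f (Int.fract a₁ • ω₁ + Int.fract a₂ • ω₂ + (⌊a₂⌋ : ℂ) * ω₂ + (⌊a₁⌋ : ℂ) * ω₁) :=
            ((p1.int_mul ⌊a₁⌋) _).symm
        _ = f z := congrArg f (by rw [key]; ring)
  have hbdd : Bornology.IsBounded (Set.range f) :=
    (hKcompact.image hf.continuous).isBounded.subset hrange
  set c := f 0 with hc
  have hconst : ∀ z, f z = c := fun z => hf.apply_eq_apply_of_bounded hbdd z 0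
  -- Step 2: h - g constant where g z = c z - conj(c z)
  set g : ℂ → ℂ := fun z => c * z - (starRingEnd ℂ) (c * z) with hg
  set L : ℂ →L[ℝ] ℂ :=
    (c • (ContinuousLinearMap.id ℂ ℂ).restrictScalars ℝ)
      - ((starRingEnd ℂ) c • Complex.conjCLE.toContinuousLinearMap) with hL
  have hLapp : ∀ v, L v = c * v - (starRingEnd ℂ) c * (starRingEnd ℂ) v := by
    intro v
    simp [hL, Complex.conjCLE, smul_eq_mul]
  have hgderiv : ∀ z, HasFDerivAt g L z := by
    intro z
    have h1 : HasFDerivAt (fun z : ℂ => c * z)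
        (c • (ContinuousLinearMap.id ℂ ℂ).restrictScalars ℝ) z := by
      have := (hasFDerivAt_id (𝕜 := ℂ) z).const_mul c
      exact this.restrictScalars ℝ
    have h2 : HasFDerivAt (fun z : ℂ => (starRingEnd ℂ) (c * z))
        ((starRingEnd ℂ) c • Complex.conjCLE.toContinuousLinearMap) z := by
      have hconj : HasFDerivAt (fun z : ℂ => (starRingEnd ℂ) z)
          Complex.conjCLE.toContinuousLinearMap (c * z) := Complex.conjCLE.hasFDerivAt
      have := hconj.comp z h1
      refine this.congr_fderiv ?_
      ext v
      simp [mul_comm]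
    exact h1.sub h2
  have hhderiv : ∀ z, HasFDerivAt h L z := by
    intro z
    have hd := (hh z).hasFDerivAt
    have : fderiv ℝ h z = L := by
      ext v
      rw [hexact z v, hconst z, hLapp]
    rwa [this] at hd
  have hdiff : ∀ z w : ℂ, h z - g z = h w - g w := by
    apply is_const_of_fderiv_eq_zero (𝕜 := ℝ)
    · exact fun z => ((hhderiv z).sub (hgderiv z)).differentiableAt
    · intro z
      have : HasFDerivAt (fun z => h z - g z) (L - L) z := (hhderiv z).sub (hgderiv z)
      simpa using this.fderiv
  -- Step 3: g has period ω₁ and ω₂, so Im(c ω₁) = Im(c ω₂) = 0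
  have hgper : ∀ ω : ℂ, (∀ z, h (z + ω) = h z) → c * ω - (starRingEnd ℂ) (c * ω) = 0 := by
    intro ω hper
    have e1 := hdiff ω 0
    have e2 : h ω = h 0 := by simpa using hper 0
    rw [e2] at e1
    have e3 : g ω = g 0 := sub_right_inj.mp e1
    simpa [hg] using e3
  have him1 := hgper ω₁ hhper₁
  have him2 := hgper ω₂ hhper₂
  have hre : ∀ w : ℂ, w - (starRingEnd ℂ) w = 0 → w = (w.re : ℂ) := by
    intro w hw
    exact (Complex.conj_eq_iff_re.mp (sub_eq_zero.mp hw).symm).symm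
  have h1 : c * ω₁ = ((c * ω₁).re : ℂ) := hre _ him1
  have h2 : c * ω₂ = ((c * ω₂).re : ℂ) := hre _ him2
  set r₁ := (c * ω₁).re with hr₁
  set r₂ := (c * ω₂).re with hr₂
  by_cases hc : c = 0
  · intro z; rw [hconst z, hc]
  · exfalso
    have hzero : r₂ • ω₁ + (-r₁) • ω₂ = 0 := by
      have hmul : c * (r₂ • ω₁ + (-r₁) • ω₂) = 0 := by
        simp only [Complex.real_smul]
        push_cast
        have : c * ((r₂ : ℂ) * ω₁ + -(r₁ : ℂ) * ω₂)
            = (r₂ : ℂ) * (c * ω₁) - (r₁ : ℂ) * (c * ω₂) := by ring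
        rw [this, h1, h2]
        ring
      exact (mul_eq_zero.mp hmul).resolve_left hc
    have := Fintype.linearIndependent_iff.mp hind ![r₂, -r₁] ?_
    · have e0 := this 0
      have e1 := this 1
      simp at e0 e1
      -- r₂ = 0 and r₁ = 0, so c * ω₁ = 0, so ω₁ = 0
      have hω₁ : ω₁ = 0 := by
        have : c * ω₁ = 0 := by rw [h1, e1]; simp
        exact (mul_eq_zero.mp this).resolve_left hc
      have := hind.ne_zero 0
      simp [hω₁] at this
    · rw [Fin.sum_univ_two]
      simpa using hzero
end
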